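/- In G_r, every walk from s to t that visits all vertices must use all of the arcs u_{i+1}u_i (1 ≤ i < r) or all of the arcs v_{i+1}v_i (1 ≤ i < r). -/

import Mathlib

open Finset

variable {V : Type*} [Fintype V] [DecidableEq V]

/-- Total `x`-weight of arcs from `A` to `B`. -/
def flowBtw (x : V → V → ℝ) (A B : Finset V) : ℝ := ∑ u ∈ A, ∑ v ∈ B, x u v

/-- `x(∂⁺(U))`: weight of arcs leaving `U`. -/
def cutOut (x : V → V → ℝ) (U : Finset V) : ℝ := flowBtw x U Uᶜ

/-- `x(∂⁻(U))`: weight of arcs entering `U`. -/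
def cutIn (x : V → V → ℝ) (U : Finset V) : ℝ := flowBtw x Uᶜ U

/-- Feasibility for the ATSPP subtour elimination LP on the complete digraph on `V`. -/
structure FeasLP (s t : V) (x : V → V → ℝ) : Prop where
  nonneg : ∀ u v, 0 ≤ x u v
  diag : ∀ v, x v v = 0
  outS : ∑ v, x s v = 1
  inS : ∑ v, x v s = 0
  inT : ∑ v, x v t = 1
  outT : ∑ v, x t v = 0
  outDeg : ∀ v, v ≠ s → v ≠ t → ∑ w, x v w = 1
  inDeg : ∀ v, v ≠ s → v ≠ t → ∑ w, x w v = 1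
  cut : ∀ U : Finset V, s ∈ U → U ≠ Finset.univ → 1 ≤ cutOut x U

/-- Vertices of the gap instance `G_r`: `s`, `t`, `u₀,…,u_{r-1}`, `v₀,…,v_{r-1}`
(`u i` stands for `u_{i+1}` in 1-based paper notation). -/
inductive GapV (r : ℕ) where
  | s | t | u (i : Fin r) | v (i : Fin r)
  deriving DecidableEq, Fintype

/-- The arcs of `G_r`. -/
def isArc {r : ℕ} : GapV r → GapV r → Bool
  | .s, .u i => i.val = 0
  | .s, .v i => i.val = 0
  | .u i, .t => i.val = r - 1
  | .v i, .t => i.val = r - 1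
  | .u i, .v j => i.val = 0 && j.val = r - 1
  | .v i, .u j => i.val = 0 && j.val = r - 1
  | .u i, .u j => j.val + 1 = i.val || i.val + 1 = j.val
  | .v i, .v j => j.val + 1 = i.val || i.val + 1 = j.val
  | _, _ => false

/-- Arc costs in `G_r`: the arcs `s u₁`, `s v₁`, `u_r t`, `v_r t`, `u_{i+1} u_i`,
`v_{i+1} v_i` cost 1; all other arcs cost 0. -/
noncomputable def gapCost {r : ℕ} : GapV r → GapV r → ℝ
  | .s, .u _ => 1
  | .s, .v _ => 1
  | .u _, .t => 1
  | .v _, .t => 1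
  | .u i, .u j => if j.val + 1 = i.val then 1 else 0
  | .v i, .v j => if j.val + 1 = i.val then 1 else 0
  | _, _ => 0

/-- The half-integral LP solution: `1/2` on every arc of `G_r`, `0` elsewhere. -/
noncomputable def gapX (r : ℕ) : GapV r → GapV r → ℝ := fun a b => if isArc a b then 1/2 else 0

/-- A list of vertices is a walk in `G_r` iff consecutive entries are arcs. -/
def IsWalkList {r : ℕ} (w : List (GapV r)) : Prop :=
  List.Chain' (fun a b => isArc a b = true) w

/-- The walk `w` uses the arc `(a, b)`. -/
def usesArc {r : ℕ} (w : List (GapV r)) (a b : GapV r) : Prop :=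
  ∃ n : ℕ, w[n]? = some a ∧ w[n + 1]? = some b

namespace StmtAux

lemma walk_arc {r : ℕ} {w : List (GapV r)} (hw : IsWalkList w) {n : ℕ} {a b : GapV r}
    (ha : w[n]? = some a) (hb : w[n + 1]? = some b) : isArc a b = true := by
  obtain ⟨h1, e1⟩ := List.getElem?_eq_some_iff.mp ha
  obtain ⟨h2, e2⟩ := List.getElem?_eq_some_iff.mp hb
  have := List.isChain_iff_getElem.mp hw n (by omega)
  simpa [List.get_eq_getElem, e1, e2] using this

lemma not_to_s {r : ℕ} (a : GapV r) : isArc a GapV.s = false := by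
  cases a <;> rfl

lemma not_from_t {r : ℕ} (b : GapV r) : isArc GapV.t b = false := by
  cases b <;> rfl

end StmtAux
namespace StmtAux

lemma core {r : ℕ} (hr : 1 ≤ r) {w : List (GapV r)} (hwalk : IsWalkList w)
    {p q : ℕ} (hpq : p < q)
    (hp : w[p]? = some (GapV.u ⟨r - 1, by omega⟩))
    (hq : w[q]? = some (GapV.v ⟨r - 1, by omega⟩))
    (hqmin : ∀ m, m < q → w[m]? ≠ some (GapV.v ⟨r - 1, by omega⟩))
    (i : ℕ) (hi : i + 1 < r) :
    usesArc w (GapV.u ⟨i + 1, hi⟩) (GapV.u ⟨i, by omega⟩) := by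
  classical
  have hqlen : q < w.length := (List.getElem?_eq_some_iff.mp hq).1
  -- the segment [p, q) consists of u-vertices
  have segC : ∀ n, p ≤ n → n < q → ∃ j : Fin r, w[n]? = some (GapV.u j) := by
    intro n
    induction n with
    | zero =>
      intro h1 _; have : p = 0 := by omega
      exact ⟨_, this ▸ hp⟩
    | succ n ih =>
      intro h1 h2
      rcases Nat.lt_or_ge n p with hnp | hnp
      · have : p = n + 1 := by omega
        exact ⟨_, this ▸ hp⟩
      · obtain ⟨j, hj⟩ := ih hnp (by omega)
        have hlen : n + 1 < w.length := by omega
        have hb : w[n+1]? = some (w[n+1]'hlen) := List.getElem?_eq_getElem hlen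
        have harc := walk_arc hwalk hj hb
        rcases hbv : w[n+1]'hlen with _ | _ | k | k
        · rw [hbv, not_to_s] at harc; exact absurd harc (by simp)
        · -- t cannot occur before q
          exfalso
          have hlen2 : n + 2 < w.length := by omega
          have hc : w[n+1+1]? = some (w[n+2]'hlen2) := List.getElem?_eq_getElem hlen2
          have := walk_arc hwalk (hbv ▸ hb) hc
          rw [not_from_t] at this; exact absurd this (by simp)
        · exact ⟨k, hbv ▸ hb⟩
        · exfalso
          rw [hbv] at harc
          have hk : k.val = r - 1 := by
            have := harc; simp [isArc] at this; exact this.2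
          have : GapV.v k = (GapV.v ⟨r - 1, by omega⟩ : GapV r) := by
            congr 1; exact Fin.ext hk
          exact hqmin (n+1) h2 (by rw [← this]; exact hbv ▸ hb)
  -- the vertex just before q is u 0
  obtain ⟨j0, hj0⟩ := segC (q - 1) (by omega) (by omega)
  have harc0 : isArc (GapV.u j0) (GapV.v ⟨r - 1, by omega⟩) = true := by
    refine walk_arc hwalk hj0 ?_
    rw [show q - 1 + 1 = q by omega]; exact hq
  have hj00 : j0.val = 0 := by simp [isArc] at harc0; exact harc0
  -- the first index in [p,q) carrying a u-vertex with value ≤ i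
  have hex : ∃ n, p ≤ n ∧ n < q ∧ ∃ j : Fin r, w[n]? = some (GapV.u j) ∧ j.val ≤ i :=
    ⟨q - 1, by omega, by omega, j0, hj0, by omega⟩
  obtain ⟨hNp, hNq, jN, hjN, hjNi⟩ := Nat.find_spec hex
  set N := Nat.find hex with hN
  have hNgtp : p < N := by
    rcases Nat.lt_or_ge p N with h | h
    · exact h
    · exfalso
      have hPN : N = p := le_antisymm h hNp
      rw [hPN, hp] at hjN
      have : jN = (⟨r - 1, by omega⟩ : Fin r) := by
        injection hjN with h'; injection h' with h''; exact h''.symm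
      rw [this] at hjNi; simp at hjNi; omega
  obtain ⟨k, hk⟩ := segC (N - 1) (by omega) (by omega)
  have hnotQ := Nat.find_min hex (show N - 1 < N by omega)
  have hki : i < k.val := by
    by_contra h
    push_neg at h
    exact hnotQ ⟨by omega, by omega, k, hk, h⟩
  have harcN : isArc (GapV.u k) (GapV.u jN) = true := by
    refine walk_arc hwalk hk ?_
    rw [show N - 1 + 1 = N by omega]; exact hjN
  have hstep : jN.val + 1 = k.val ∨ k.val + 1 = jN.val := by
    simpa [isArc] using harcN
  have hkval : k.val = i + 1 ∧ jN.val = i := by omega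
  refine ⟨N - 1, ?_, ?_⟩
  · have : k = (⟨i + 1, hi⟩ : Fin r) := Fin.ext hkval.1
    rw [← this]; exact hk
  · have : jN = (⟨i, by omega⟩ : Fin r) := Fin.ext hkval.2
    rw [show N - 1 + 1 = N by omega, ← this]; exact hjN

end StmtAux
namespace StmtAux

def gswap {r : ℕ} : GapV r → GapV r
  | .s => .s
  | .t => .t
  | .u i => .v i
  | .v i => .u i

lemma isArc_gswap {r : ℕ} (a b : GapV r) : isArc (gswap a) (gswap b) = isArc a b := by
  cases a <;> cases b <;> rfl

lemma gswap_eq_v {r : ℕ} {a : GapV r} {j : Fin r} (h : gswap a = GapV.v j) :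
    a = GapV.u j := by
  cases a <;> simp [gswap] at h ⊢ <;> try exact h
lemma gswap_eq_u {r : ℕ} {a : GapV r} {j : Fin r} (h : gswap a = GapV.u j) :
    a = GapV.v j := by
  cases a <;> simp [gswap] at h ⊢ <;> try exact h

end StmtAux

theorem stmt11 (r : ℕ) (hr : 1 ≤ r) (w : List (GapV r))
    (hwalk : IsWalkList w)
    (hhead : w.head? = some GapV.s) (hlast : w.getLast? = some GapV.t)
    (hspan : ∀ a : GapV r, a ∈ w) :
    (∀ (i : ℕ) (h : i + 1 < r),
        usesArc w (GapV.u ⟨i + 1, h⟩) (GapV.u ⟨i, Nat.lt_of_succ_lt h⟩)) ∨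
    (∀ (i : ℕ) (h : i + 1 < r),
        usesArc w (GapV.v ⟨i + 1, h⟩) (GapV.v ⟨i, Nat.lt_of_succ_lt h⟩)) := by
  classical
  have hrr : r - 1 < r := by omega
  have hexu : ∃ n, w[n]? = some (GapV.u ⟨r - 1, hrr⟩) :=
    List.mem_iff_getElem?.mp (hspan _)
  have hexv : ∃ n, w[n]? = some (GapV.v ⟨r - 1, hrr⟩) :=
    List.mem_iff_getElem?.mp (hspan _)
  set p := Nat.find hexu with hpdef
  set q := Nat.find hexv with hqdef
  have hp := Nat.find_spec hexu
  have hq := Nat.find_spec hexv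
  rw [← hpdef] at hp
  rw [← hqdef] at hq
  have hpq : p ≠ q := by
    intro h
    rw [h, hq] at hp
    exact absurd hp (by simp)
  rcases Nat.lt_or_ge p q with h | h
  · left
    intro i hi
    exact StmtAux.core hr hwalk h hp hq (fun m hm => Nat.find_min hexv hm) i hi
  · right
    have hqp : q < p := by omega
    intro i hi
    -- apply core to the swapped walk
    have hwalk' : IsWalkList (w.map StmtAux.gswap) := by
      unfold IsWalkList at *
      show List.IsChain _ _
      rw [List.isChain_map]
      exact hwalk.imp fun a b hab => by rwa [StmtAux.isArc_gswap]
    have hp' : (w.map StmtAux.gswap)[q]? = some (GapV.u ⟨r - 1, by omega⟩) := by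
      rw [List.getElem?_map, hq]; rfl
    have hq' : (w.map StmtAux.gswap)[p]? = some (GapV.v ⟨r - 1, by omega⟩) := by
      rw [List.getElem?_map, hp]; rfl
    have hmin' : ∀ m, m < p → (w.map StmtAux.gswap)[m]? ≠ some (GapV.v ⟨r - 1, by omega⟩) := by
      intro m hm hcon
      rw [List.getElem?_map] at hcon
      obtain ⟨a, ha, hae⟩ := Option.map_eq_some_iff.mp hcon
      have := StmtAux.gswap_eq_v hae
      exact Nat.find_min hexu hm (this ▸ ha)
    obtain ⟨n, h1, h2⟩ := StmtAux.core hr hwalk' hqp hp' hq' hmin' i hi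
    rw [List.getElem?_map] at h1 h2
    obtain ⟨a, ha, hae⟩ := Option.map_eq_some_iff.mp h1
    obtain ⟨b, hb, hbe⟩ := Option.map_eq_some_iff.mp h2
    exact ⟨n, (StmtAux.gswap_eq_u hae) ▸ ha, (StmtAux.gswap_eq_u hbe) ▸ hb⟩
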